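/- For ℓ, m ≥ 1 define Q_m(ℓ) = det(h_{m + j − i})_{1 ≤ i,j ≤ ℓ}, where h_k denotes the complete homogeneous symmetric polynomial of degree k in a fixed finite set of variables (with h_0 = 1 and h_k = 0 for k < 0). Then Q_m(ℓ)² = Q_{m−1}(ℓ) Q_{m+1}(ℓ) + Q_m(ℓ−1) Q_m(ℓ+1), where Q_0(ℓ) = 1 and Q_m(0) = 1. -/

import Mathlib

open Matrix

section TwoRows

variable {R : Type*} [CommRing R] {ι : Type*} [Fintype ι] [DecidableEq ι]

lemma one_row (i : ι) : (1 : Matrix ι ι R) i = Pi.single i 1 := by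
  funext j
  simp [Matrix.one_apply, Pi.single_apply, eq_comm]

lemma updateRow_comm' (M : Matrix ι ι R) {p q : ι} (h : p ≠ q) (b c : ι → R) :
    (M.updateRow p b).updateRow q c = (M.updateRow q c).updateRow p b := by
  ext i j
  rcases eq_or_ne i p with rfl | hip
  · simp [Matrix.updateRow_apply, h]
  · rcases eq_or_ne i q with rfl | hiq
    · simp [Matrix.updateRow_apply, h.symm]
    · simp [Matrix.updateRow_apply, hip, hiq]

lemma det_updateRow_expand (M : Matrix ι ι R) (j : ι) (v : ι → R) :
    (M.updateRow j v).det = ∑ k, v k * (M.updateRow j (Pi.single k 1)).det := by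
  have hgen : ∀ s : Finset ι,
      (M.updateRow j (∑ k ∈ s, Pi.single k (v k))).det
        = ∑ k ∈ s, v k * (M.updateRow j (Pi.single k 1)).det := by
    intro s
    induction s using Finset.induction_on with
    | empty =>
        simpa using det_eq_zero_of_row_eq_zero j
          (by simp : ∀ jj, (M.updateRow j (0 : ι → R)) j jj = 0)
    | @insert a s ha ih =>
        rw [Finset.sum_insert ha, Matrix.det_updateRow_add, ih, Finset.sum_insert ha]
        congr 1
        have : Pi.single a (v a) = v a • (Pi.single a 1 : ι → R) := by
          funext x
          by_cases hx : x = a <;> simp [Pi.single_apply, hx]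
        rw [this, Matrix.det_updateRow_smul]
  have hv : v = ∑ k, Pi.single k (v k) := (Finset.univ_sum_single v).symm
  conv_lhs => rw [hv]
  exact hgen Finset.univ

lemma det_swap_rows {p q : ι} (hpq : p ≠ q) :
    (((1 : Matrix ι ι R).updateRow q (Pi.single p 1)).updateRow p (Pi.single q 1)).det = -1 := by
  have hE : ((1 : Matrix ι ι R).updateRow q (Pi.single p 1)).updateRow p (Pi.single q 1)
      = (Equiv.swap p q).permMatrix R := by
    ext i j
    simp only [Equiv.Perm.permMatrix, PEquiv.toMatrix_apply, Equiv.toPEquiv_apply,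
      Option.mem_some_iff]
    by_cases h1 : i = p
    · subst h1
      simp [Pi.single_apply, Equiv.swap_apply_left, eq_comm]
    · by_cases h2 : i = q
      · subst h2
        simp [Matrix.updateRow_ne, h1, hpq, hpq.symm, Equiv.swap_apply_right, Pi.single_apply,
          eq_comm]
      · simp [Matrix.updateRow_ne, h1, h2, Equiv.swap_apply_of_ne_of_ne h1 h2,
          Matrix.one_apply, eq_comm]
  rw [hE, det_permutation, Equiv.Perm.sign_swap hpq]
  simp

lemma det_single_single {p q : ι} (hpq : p ≠ q) (k l : ι) :
    (((1 : Matrix ι ι R).updateRow q (Pi.single l 1)).updateRow p (Pi.single k 1)).det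
      = if k = p ∧ l = q then 1 else if k = q ∧ l = p then -1 else 0 := by
  rcases eq_or_ne p k with rfl | hkp
  · rcases eq_or_ne q l with rfl | hlq
    · rw [show (Pi.single q (1:R)) = (1 : Matrix ι ι R) q from (one_row q).symm,
        Matrix.updateRow_eq_self,
        show (Pi.single p (1:R)) = (1 : Matrix ι ι R) p from (one_row p).symm,
        Matrix.updateRow_eq_self, det_one]
      simp
    · rcases eq_or_ne p l with rfl | hlp
      · rw [if_neg (by tauto), if_neg (by tauto)]
        refine det_zero_of_row_eq hpq ?_
        simp [Matrix.updateRow_apply, hpq.symm]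
      · rw [if_neg (by tauto), if_neg (by tauto)]
        refine det_zero_of_row_eq (show q ≠ l from fun h => hlq h) ?_
        simp [Matrix.updateRow_ne, Matrix.updateRow_self, hpq.symm, Ne.symm hlp,
          Ne.symm hlq, one_row]
  · rcases eq_or_ne q k with rfl | hkq
    · rcases eq_or_ne p l with rfl | hlp
      · rw [if_neg (by tauto), if_pos ⟨rfl, rfl⟩]
        exact det_swap_rows hpq
      · rcases eq_or_ne q l with rfl | hlq
        · rw [if_neg (by tauto), if_neg (by tauto)]
          refine det_zero_of_row_eq hpq ?_
          simp [Matrix.updateRow_apply, hpq.symm]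
        · rw [if_neg (by tauto), if_neg (by tauto)]
          refine det_zero_of_row_eq (show q ≠ l from fun h => hlq h) ?_
          simp [Matrix.updateRow_ne, Matrix.updateRow_self, hpq.symm, Ne.symm hlp,
            Ne.symm hlq, one_row]
    · rw [if_neg (by tauto), if_neg (by tauto)]
      refine det_zero_of_row_eq (show p ≠ k from fun h => hkp h) ?_
      simp [Matrix.updateRow_ne, Matrix.updateRow_self, Ne.symm hkp, Ne.symm hkq, one_row]

lemma det_two_updateRow {p q : ι} (hpq : p ≠ q) (b c : ι → R) :
    (((1 : Matrix ι ι R).updateRow p b).updateRow q c).det = b p * c q - b q * c p := by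
  rw [det_updateRow_expand]
  have step : ∀ l : ι,
      (((1 : Matrix ι ι R).updateRow p b).updateRow q (Pi.single l 1)).det
        = b p * (if l = q then (1:R) else 0) + b q * (if l = p then (-1:R) else 0) := by
    intro l
    rw [updateRow_comm' _ hpq, det_updateRow_expand]
    have : ∀ k : ι, (((1 : Matrix ι ι R).updateRow q (Pi.single l 1)).updateRow p
        (Pi.single k 1)).det = if k = p ∧ l = q then 1 else if k = q ∧ l = p then -1 else 0 :=
      fun k => det_single_single hpq k l
    simp only [this]
    rcases eq_or_ne q l with rfl | hlq
    · simp [mul_ite, Finset.sum_ite_eq', hpq, hpq.symm]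
    · rcases eq_or_ne p l with rfl | hlp
      · simp [mul_ite, Finset.sum_ite_eq', hpq, hpq.symm]
      · simp [mul_ite, Ne.symm hlq, Ne.symm hlp]
  simp only [step]
  simp [mul_add, Finset.sum_add_distrib, mul_ite, mul_one, mul_zero, mul_neg,
    Finset.mul_sum, Finset.sum_ite_eq', mul_comm, mul_left_comm]
  ring

end TwoRows

section DJ

variable {R : Type*} [CommRing R] {n : ℕ}

lemma dj_key (A : Matrix (Fin (n+2)) (Fin (n+2)) R) :
    (adjugate A 0 0 * adjugate A (Fin.last (n+1)) (Fin.last (n+1))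
      - adjugate A 0 (Fin.last (n+1)) * adjugate A (Fin.last (n+1)) 0) * A.det
    = A.det ^ 2
      * (A.submatrix (fun k : Fin n => k.succ.castSucc) (fun k : Fin n => k.succ.castSucc)).det := by
  set L : Fin (n+2) := Fin.last (n+1) with hL
  have h0L : (0 : Fin (n+2)) ≠ L := by
    intro h
    have := congrArg Fin.val h
    simp [hL, Fin.val_last] at this
  set M : Matrix (Fin (n+2)) (Fin (n+2)) R :=
    ((1 : Matrix (Fin (n+2)) (Fin (n+2)) R).updateRow 0 (adjugate A 0)).updateRow L (adjugate A L)
    with hM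
  have hdetM : M.det = adjugate A 0 0 * adjugate A L L - adjugate A 0 L * adjugate A L 0 :=
    det_two_updateRow h0L _ _
  have hBA := adjugate_mul A
  have hMA : M * A = (A.updateRow 0 (A.det • (Pi.single 0 1 : Fin (n+2) → R))).updateRow L (A.det • (Pi.single L 1 : Fin (n+2) → R)) := by
    ext i j
    rcases eq_or_ne i L with rfl | hiL
    · have h1 : (M * A) L j = (adjugate A * A) L j := by
        simp [Matrix.mul_apply, hM, Matrix.updateRow_self]
      rw [h1, hBA]
      simp [Matrix.updateRow_self, Matrix.one_apply, Pi.single_apply, eq_comm]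
    · rcases eq_or_ne i 0 with rfl | hi0
      · have h1 : (M * A) 0 j = (adjugate A * A) 0 j := by
          simp [Matrix.mul_apply, hM, Matrix.updateRow_ne h0L, Matrix.updateRow_self]
        rw [h1, hBA]
        simp [Matrix.updateRow_ne h0L, Matrix.updateRow_self, Matrix.one_apply,
          Pi.single_apply, eq_comm]
      · have hMi : M i = (1 : Matrix (Fin (n+2)) (Fin (n+2)) R) i := by
          simp [hM, Matrix.updateRow_ne hiL, Matrix.updateRow_ne hi0]
        have h1 : (M * A) i j = A i j := by
          simp [Matrix.mul_apply, hMi, Matrix.one_apply]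
        rw [h1]
        simp [Matrix.updateRow_ne hiL, Matrix.updateRow_ne hi0]
  have hcof : ((A.updateRow 0 (Pi.single 0 1)).updateRow L (Pi.single L 1)).det
      = (A.submatrix (fun k : Fin n => k.succ.castSucc) (fun k : Fin n => k.succ.castSucc)).det := by
    rw [show ((A.updateRow 0 (Pi.single 0 1)).updateRow L (Pi.single L 1)).det
        = adjugate (A.updateRow 0 (Pi.single 0 1)) L L from (adjugate_apply _ L L).symm,
      adjugate_fin_succ_eq_det_submatrix]
    have hsign : ((-1 : R)) ^ ((L : ℕ) + (L : ℕ)) = 1 := by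
      refine Even.neg_one_pow ⟨(L : ℕ), rfl⟩
    rw [hsign, one_mul]
    have e2 : (A.updateRow 0 (Pi.single 0 1)).submatrix L.succAbove L.succAbove
        = (A.submatrix Fin.castSucc Fin.castSucc).updateRow 0 (Pi.single 0 1) := by
      rw [hL, Fin.succAbove_last]
      ext i j
      rcases eq_or_ne i 0 with rfl | hi
      · simp [Matrix.submatrix_apply, Fin.castSucc_zero, Matrix.updateRow_self,
          Pi.single_apply, Fin.castSucc_eq_zero_iff]
      · have hci : Fin.castSucc i ≠ 0 := by
          simpa [Fin.castSucc_eq_zero_iff] using hi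
        simp [Matrix.submatrix_apply, Matrix.updateRow_ne hci, Matrix.updateRow_ne hi]
    rw [e2,
      show ((A.submatrix Fin.castSucc Fin.castSucc).updateRow 0 (Pi.single 0 1)).det
        = adjugate (A.submatrix Fin.castSucc Fin.castSucc) 0 0 from (adjugate_apply _ 0 0).symm,
      adjugate_fin_succ_eq_det_submatrix]
    simp [Matrix.submatrix_submatrix, Function.comp_def]
  have hdetMA : (M * A).det = A.det ^ 2
      * (A.submatrix (fun k : Fin n => k.succ.castSucc) (fun k : Fin n => k.succ.castSucc)).det := by
    rw [hMA, Matrix.det_updateRow_smul, updateRow_comm' _ h0L, Matrix.det_updateRow_smul,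
      updateRow_comm' _ h0L.symm, hcof]
    ring
  calc (adjugate A 0 0 * adjugate A L L - adjugate A 0 L * adjugate A L 0) * A.det
      = M.det * A.det := by rw [hdetM]
    _ = (M * A).det := (det_mul M A).symm
    _ = _ := hdetMA

end DJ

section DJ2

variable {R : Type*} [CommRing R] {n : ℕ}

lemma dj_key' (A : Matrix (Fin (n+2)) (Fin (n+2)) R) :
    ((A.submatrix Fin.succ Fin.succ).det * (A.submatrix Fin.castSucc Fin.castSucc).det
      - (A.submatrix Fin.castSucc Fin.succ).det * (A.submatrix Fin.succ Fin.castSucc).det)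
      * A.det
    = A.det ^ 2
      * (A.submatrix (fun k : Fin n => k.succ.castSucc) (fun k : Fin n => k.succ.castSucc)).det := by
  have e1 : adjugate A 0 0 = (A.submatrix Fin.succ Fin.succ).det := by
    rw [adjugate_fin_succ_eq_det_submatrix]
    simp
  have e2 : adjugate A (Fin.last (n+1)) (Fin.last (n+1))
      = (A.submatrix Fin.castSucc Fin.castSucc).det := by
    rw [adjugate_fin_succ_eq_det_submatrix, Fin.succAbove_last]
    rw [show ((-1 : R)) ^ (((Fin.last (n+1) : Fin (n+2)) : ℕ) + ((Fin.last (n+1) : Fin (n+2)) : ℕ))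
        = 1 from Even.neg_one_pow ⟨_, rfl⟩, one_mul]
  have e3 : adjugate A 0 (Fin.last (n+1)) * adjugate A (Fin.last (n+1)) 0
      = (A.submatrix Fin.castSucc Fin.succ).det * (A.submatrix Fin.succ Fin.castSucc).det := by
    rw [adjugate_fin_succ_eq_det_submatrix, adjugate_fin_succ_eq_det_submatrix,
      Fin.succAbove_last]
    simp only [Fin.val_zero, Fin.val_last, zero_add, add_zero, Fin.succAbove_zero]
    rw [mul_mul_mul_comm, ← pow_add,
      show ((-1 : R)) ^ ((n+1) + (n+1)) = 1 from Even.neg_one_pow ⟨_, rfl⟩, one_mul]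
  have h := dj_key A
  rw [e1, e2, e3] at h
  exact h

lemma dodgson_domain {S : Type*} [CommRing S] [IsDomain S]
    (A : Matrix (Fin (n+2)) (Fin (n+2)) S) (hA : A.det ≠ 0) :
    A.det * (A.submatrix (fun k : Fin n => k.succ.castSucc) (fun k : Fin n => k.succ.castSucc)).det
    = (A.submatrix Fin.succ Fin.succ).det * (A.submatrix Fin.castSucc Fin.castSucc).det
      - (A.submatrix Fin.castSucc Fin.succ).det * (A.submatrix Fin.succ Fin.castSucc).det := by
  have h := dj_key' A
  have h2 : A.det * ((A.submatrix Fin.succ Fin.succ).det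
        * (A.submatrix Fin.castSucc Fin.castSucc).det
      - (A.submatrix Fin.castSucc Fin.succ).det * (A.submatrix Fin.succ Fin.castSucc).det)
      = A.det * (A.det * (A.submatrix (fun k : Fin n => k.succ.castSucc)
          (fun k : Fin n => k.succ.castSucc)).det) := by
    linear_combination h
  exact (mul_left_cancel₀ hA h2).symm

theorem dodgson (A : Matrix (Fin (n+2)) (Fin (n+2)) R) :
    A.det * (A.submatrix (fun k : Fin n => k.succ.castSucc) (fun k : Fin n => k.succ.castSucc)).det
    = (A.submatrix Fin.succ Fin.succ).det * (A.submatrix Fin.castSucc Fin.castSucc).det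
      - (A.submatrix Fin.castSucc Fin.succ).det * (A.submatrix Fin.succ Fin.castSucc).det := by
  let G : Matrix (Fin (n+2)) (Fin (n+2)) (MvPolynomial (Fin (n+2) × Fin (n+2)) ℤ) :=
    Matrix.of fun i j => MvPolynomial.X (i, j)
  have hG : G.det ≠ 0 := by
    intro h
    have h2 := congrArg
      (MvPolynomial.eval (fun p : Fin (n+2) × Fin (n+2) => if p.1 = p.2 then (1:ℤ) else 0)) h
    rw [RingHom.map_det, map_zero, RingHom.mapMatrix_apply] at h2
    have h3 : G.map (MvPolynomial.eval
        (fun p : Fin (n+2) × Fin (n+2) => if p.1 = p.2 then (1:ℤ) else 0))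
        = (1 : Matrix (Fin (n+2)) (Fin (n+2)) ℤ) := by
      ext i j
      simp [G, Matrix.one_apply]
    rw [h3, det_one] at h2
    exact one_ne_zero h2
  have key := dodgson_domain G hG
  let f : MvPolynomial (Fin (n+2) × Fin (n+2)) ℤ →+* R :=
    (MvPolynomial.aeval (R := ℤ) fun p : Fin (n+2) × Fin (n+2) => A p.1 p.2).toRingHom
  have hmap : G.map f = A := by
    ext i j
    simp [G, f]
  have h := congrArg f key
  simp only [_root_.map_mul, map_sub, RingHom.map_det, RingHom.mapMatrix_apply,
    ← Matrix.submatrix_map, hmap] at h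
  exact h

end DJ2

/-- The complete homogeneous symmetric polynomial of degree `k ∈ ℤ` in `N` variables,
with `h_k = 0` for `k < 0` (and `h_0 = 1`). -/
noncomputable def hInt (N : ℕ) (k : ℤ) : MvPolynomial (Fin N) ℤ :=
  if 0 ≤ k then MvPolynomial.hsymm (Fin N) ℤ k.toNat else 0

/-- `Q_m(ℓ) = det (h_{m+j-i})_{1 ≤ i,j ≤ ℓ}`, the Jacobi–Trudi determinant of the
`ℓ × m` rectangle. -/
noncomputable def QJT (N m ℓ : ℕ) : MvPolynomial (Fin N) ℤ :=
  Matrix.det (fun i j : Fin ℓ => hInt N ((m : ℤ) + (j : ℤ) - (i : ℤ)))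

lemma QJT_zero_left (N ℓ' : ℕ) : QJT N 0 ℓ' = 1 := by
  unfold QJT
  rw [Matrix.det_of_upperTriangular (M := fun i j : Fin ℓ' => hInt N (((0:ℕ) : ℤ) + (j : ℤ) - (i : ℤ)))]
  · refine Finset.prod_eq_one fun i _ => ?_
    have : ((0:ℕ) : ℤ) + (i : ℤ) - (i : ℤ) = 0 := by ring
    rw [this]
    simp [hInt, MvPolynomial.hsymm_zero]
  · intro i j hij
    have hij' : (j : ℤ) < (i : ℤ) := by exact_mod_cast hij
    rw [show (fun i j : Fin ℓ' => hInt N (((0:ℕ) : ℤ) + (j : ℤ) - (i : ℤ))) i j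
      = hInt N (((0:ℕ) : ℤ) + (j : ℤ) - (i : ℤ)) from rfl, hInt, if_neg (by omega)]

lemma QJT_zero_right (N m' : ℕ) : QJT N m' 0 = 1 := Matrix.det_isEmpty

theorem stmt1 (N m ℓ : ℕ) (hm : 1 ≤ m) (hℓ : 1 ≤ ℓ) :
    (∀ ℓ', QJT N 0 ℓ' = 1) ∧ (∀ m', QJT N m' 0 = 1) ∧
    QJT N m ℓ ^ 2 =
      QJT N (m - 1) ℓ * QJT N (m + 1) ℓ + QJT N m (ℓ - 1) * QJT N m (ℓ + 1) := by
  refine ⟨fun ℓ' => QJT_zero_left N ℓ', fun m' => QJT_zero_right N m', ?_⟩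
  obtain ⟨n, rfl⟩ : ∃ n, ℓ = n + 1 := ⟨ℓ - 1, by omega⟩
  obtain ⟨m', rfl⟩ : ∃ k, m = k + 1 := ⟨m - 1, by omega⟩
  simp only [Nat.add_sub_cancel]
  set A : Matrix (Fin (n+2)) (Fin (n+2)) (MvPolynomial (Fin N) ℤ) :=
    Matrix.of fun i j => hInt N (((m' + 1 : ℕ) : ℤ) + (j : ℤ) - (i : ℤ)) with hA
  have hdetA : A.det = QJT N (m' + 1) (n + 1 + 1) := rfl
  have hss : (A.submatrix Fin.succ Fin.succ).det = QJT N (m' + 1) (n + 1) := by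
    have e : A.submatrix Fin.succ Fin.succ
        = Matrix.of fun i j : Fin (n+1) => hInt N ((((m' + 1) : ℕ) : ℤ) + (j : ℤ) - (i : ℤ)) := by
      ext i j
      simp only [Matrix.submatrix_apply, hA, Matrix.of_apply]
      first
      | rfl
      | (congr 1
         push_cast [Fin.val_succ, Fin.coe_castSucc]
         try ring)
    rw [e]
    rfl
  have hcc : (A.submatrix Fin.castSucc Fin.castSucc).det = QJT N (m' + 1) (n + 1) := by
    have e : A.submatrix Fin.castSucc Fin.castSucc
        = Matrix.of fun i j : Fin (n+1) => hInt N ((((m' + 1) : ℕ) : ℤ) + (j : ℤ) - (i : ℤ)) := by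
      ext i j
      simp only [Matrix.submatrix_apply, hA, Matrix.of_apply]
      first
      | rfl
      | (congr 1
         push_cast [Fin.val_succ, Fin.coe_castSucc]
         try ring)
    rw [e]
    rfl
  have hcs : (A.submatrix Fin.castSucc Fin.succ).det = QJT N (m' + 1 + 1) (n + 1) := by
    have e : A.submatrix Fin.castSucc Fin.succ
        = Matrix.of fun i j : Fin (n+1) => hInt N ((((m' + 1 + 1) : ℕ) : ℤ) + (j : ℤ) - (i : ℤ)) := by
      ext i j
      simp only [Matrix.submatrix_apply, hA, Matrix.of_apply]
      first
      | rfl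
      | (congr 1
         push_cast [Fin.val_succ, Fin.coe_castSucc]
         try ring)
    rw [e]
    rfl
  have hsc : (A.submatrix Fin.succ Fin.castSucc).det = QJT N m' (n + 1) := by
    have e : A.submatrix Fin.succ Fin.castSucc
        = Matrix.of fun i j : Fin (n+1) => hInt N (((m' : ℕ) : ℤ) + (j : ℤ) - (i : ℤ)) := by
      ext i j
      simp only [Matrix.submatrix_apply, hA, Matrix.of_apply]
      first
      | rfl
      | (congr 1
         push_cast [Fin.val_succ, Fin.coe_castSucc]
         try ring)
    rw [e]
    rfl
  have hin : (A.submatrix (fun k : Fin n => k.succ.castSucc)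
      (fun k : Fin n => k.succ.castSucc)).det = QJT N (m' + 1) n := by
    have e : A.submatrix (fun k : Fin n => k.succ.castSucc) (fun k : Fin n => k.succ.castSucc)
        = Matrix.of fun i j : Fin n => hInt N (((m' + 1 : ℕ) : ℤ) + (j : ℤ) - (i : ℤ)) := by
      ext i j
      simp only [Matrix.submatrix_apply, hA, Matrix.of_apply]
      first
      | rfl
      | (congr 1
         push_cast [Fin.val_succ, Fin.coe_castSucc]
         try ring)
    rw [e]
    rfl
  have h := dodgson A
  rw [hdetA, hss, hcc, hcs, hsc, hin] at h
  linear_combination -h
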